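/- Let A ∈ ℝ^{d×N}, y ∈ ℝ^d, and suppose x* is any optimal solution of min_x ‖x‖₁ subject to y = A x, where the feasible set is nonempty. If r(P(A)) > 0 is the inradius of the symmetrized convex hull of the columns of A, then ‖x*‖₁ ≤ ‖y‖₂ / r(P(A)). -/

import Mathlib

theorem stmt2 {d N : ℕ} (A : Matrix (Fin d) (Fin N) ℝ) (y : Fin d → ℝ)
    (r : ℝ) (hr : 0 < r)
    (hball : ∀ v : Fin d → ℝ, Real.sqrt (∑ i, (v i)^2) ≤ r →
      ∃ x : Fin N → ℝ, (∑ i, |x i|) ≤ 1 ∧ A.mulVec x = v)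
    (xstar : Fin N → ℝ) (hfeas : A.mulVec xstar = y)
    (hopt : ∀ x : Fin N → ℝ, A.mulVec x = y → ∑ i, |xstar i| ≤ ∑ i, |x i|) :
    ∑ i, |xstar i| ≤ Real.sqrt (∑ i, (y i)^2) / r := by
  set s := Real.sqrt (∑ i, (y i)^2) with hs
  have hsnn : 0 ≤ s := Real.sqrt_nonneg _
  rcases eq_or_lt_of_le hsnn with h0 | hspos
  · -- s = 0, so y = 0
    have hsum : (∑ i, (y i)^2) = 0 := by
      have h := Real.sqrt_eq_zero'.mp h0.symm
      exact le_antisymm h (Finset.sum_nonneg fun i _ => sq_nonneg _)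
    have hy : y = 0 := by
      funext i
      have := (Finset.sum_eq_zero_iff_of_nonneg (fun i _ => sq_nonneg (y i))).mp hsum i (Finset.mem_univ i)
      exact pow_eq_zero_iff (by norm_num) |>.mp this
    have h0feas : A.mulVec 0 = y := by simp [hy]
    have := hopt 0 h0feas
    simp only [Pi.zero_apply, abs_zero, Finset.sum_const_zero] at this
    calc ∑ i, |xstar i| ≤ 0 := this
      _ ≤ s / r := by positivity
  · -- s > 0
    set v : Fin d → ℝ := fun i => (r / s) * y i with hv
    have hnorm : Real.sqrt (∑ i, (v i)^2) ≤ r := by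
      have : (∑ i, (v i)^2) = (r/s)^2 * ∑ i, (y i)^2 := by
        simp [hv, mul_pow, Finset.mul_sum]
      rw [this, Real.sqrt_mul (by positivity), Real.sqrt_sq (by positivity), ← hs]
      rw [div_mul_eq_mul_div, mul_div_assoc, div_self hspos.ne', mul_one]
    obtain ⟨x, hx1, hxv⟩ := hball v hnorm
    have hfeas' : A.mulVec (fun i => (s / r) * x i) = y := by
      have : (fun i => (s / r) * x i) = (s / r) • x := rfl
      rw [this, Matrix.mulVec_smul, hxv]
      funext i
      simp only [Pi.smul_apply, hv, smul_eq_mul]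
      field_simp
    have := hopt _ hfeas'
    refine this.trans ?_
    have : ∑ i, |(s / r) * x i| = (s / r) * ∑ i, |x i| := by
      rw [Finset.mul_sum]
      congr 1; funext i
      rw [abs_mul, abs_of_nonneg (by positivity)]
    rw [this]
    calc (s / r) * ∑ i, |x i| ≤ (s / r) * 1 := by
          apply mul_le_mul_of_nonneg_left hx1 (by positivity)
      _ = s / r := mul_one _
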